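/- Let c be a job-scheduling instance with m machines and n jobs and let B be any allocation, with bundles B_k := {j : B j = k} for k ∈ Fin m. Then there exists k ∈ Fin m such that the cyclically shifted assignment giving machine i the bundle B_{(m − i + k) mod m} is mean-efficient, i.e., Σ_{i ∈ Fin m} c_i(B_{(m − i + k) mod m}) ≤ (1/m)·Σ_{i ∈ Fin m} c_i([n]). -/
import Mathlib


open Finset

noncomputable section

/-- The cost to machine `i` of the bundle of jobs assigned to machine `k` under allocation `A`. -/
def bundleCost {m n : ℕ} (c : Fin m → Fin n → ℝ) (A : Fin n → Fin m) (i k : Fin m) : ℝ :=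
  ∑ j ∈ Finset.univ.filter (fun j => A j = k), c i j

/-- The total cost to machine `i` of all jobs, `c_i([n])`. -/
def rowSum {m n : ℕ} (c : Fin m → Fin n → ℝ) (i : Fin m) : ℝ :=
  ∑ j, c i j

/-- Some cyclic (anti-diagonal) shift of the bundles of any allocation is mean-efficient. -/
theorem stmt_2 {m n : ℕ} (hm : 2 ≤ m) (hn : 2 ≤ n)
    (c : Fin m → Fin n → ℝ) (hc : ∀ i j, 0 ≤ c i j) (B : Fin n → Fin m) :
    ∃ k : Fin m,
      ∑ i : Fin m, bundleCost c B i ⟨(m - (i : ℕ) + (k : ℕ)) % m, Nat.mod_lt _ (by omega)⟩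
        ≤ (1 / (m : ℝ)) * ∑ i : Fin m, rowSum c i := by
  have hm0 : 0 < m := by omega
  have hsum : ∀ i : Fin m,
      ∑ k : Fin m, bundleCost c B i ⟨(m - (i : ℕ) + (k : ℕ)) % m, Nat.mod_lt _ (by omega)⟩
        = rowSum c i := by
    intro i
    have hbij : Function.Bijective
        (fun k : Fin m => (⟨(m - (i : ℕ) + (k : ℕ)) % m, Nat.mod_lt _ (by omega)⟩ : Fin m)) := by
      apply Finite.injective_iff_bijective.mp
      intro a b hab
      have h1 : (m - (i:ℕ) + (a:ℕ)) % m = (m - (i:ℕ) + (b:ℕ)) % m := congrArg Fin.val hab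
      have h2 : (a:ℕ) % m = (b:ℕ) % m := Nat.ModEq.add_left_cancel' (m - (i:ℕ)) h1
      ext
      rwa [Nat.mod_eq_of_lt a.isLt, Nat.mod_eq_of_lt b.isLt] at h2
    rw [Fintype.sum_bijective _ hbij _ (fun l => bundleCost c B i l) (fun k => rfl)]
    unfold bundleCost rowSum
    rw [← Finset.sum_fiberwise Finset.univ (fun j => B j) (fun j => c i j)]
  have htot : ∑ k : Fin m, ∑ i : Fin m,
      bundleCost c B i ⟨(m - (i : ℕ) + (k : ℕ)) % m, Nat.mod_lt _ (by omega)⟩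
        = ∑ i : Fin m, rowSum c i := by
    rw [Finset.sum_comm]
    exact Finset.sum_congr rfl fun i _ => hsum i
  by_contra h
  push_neg at h
  have hlt : ∑ k : Fin m, ((1 / (m : ℝ)) * ∑ i : Fin m, rowSum c i)
      < ∑ i : Fin m, rowSum c i := by
    have := Finset.sum_lt_sum_of_nonempty (s := (Finset.univ : Finset (Fin m)))
      (f := fun _ => (1 / (m : ℝ)) * ∑ i : Fin m, rowSum c i)
      (g := fun k : Fin m => ∑ i : Fin m,
        bundleCost c B i ⟨(m - (i : ℕ) + (k : ℕ)) % m, Nat.mod_lt _ (by omega)⟩)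
      ⟨⟨0, hm0⟩, Finset.mem_univ _⟩ (fun k _ => h k)
    rwa [htot] at this
  rw [Finset.sum_const, Finset.card_univ, Fintype.card_fin, nsmul_eq_mul] at hlt
  have : (m : ℝ) * (1 / (m : ℝ)) = 1 := by
    field_simp
  rw [← mul_assoc, this, one_mul] at hlt
  exact lt_irrefl _ hlt
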